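/- Let W be a symmetric matrix with 0 ⪯ W ⪯ I and with eigenvalues either 0 or in [λ_min⁺, 1], λ_min⁺ > 0. Let K = ⌈(1/λ_min⁺)·ln 2⌉ and define D(W) = I - (I - W)^K. Then D(W) is symmetric PSD, ker D(W) = ker W, and all nonzero eigenvalues of D(W) lie in [1/2, 1]; in particular λ_max(D(W))/λ_min⁺(D(W)) ≤ 2. -/
import Mathlib


open Matrix

/-- scalar bound: for `lammin ≤ lam ≤ 1` and `K = ⌈(1/lammin) log 2⌉₊`,
`(1 - lam)^K ≤ 1/2`. -/
lemma aux_scalar_17 {lammin lam : ℝ} (hlam : 0 < lammin)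
    (h1 : lammin ≤ lam) (h2 : lam ≤ 1) {K : ℕ}
    (hK : K = ⌈(1 / lammin) * Real.log 2⌉₊) :
    (1 - lam) ^ K ≤ 1 / 2 := by
  have hm1 : lammin ≤ 1 := le_trans h1 h2
  have h0 : (0:ℝ) ≤ 1 - lam := by linarith
  have hle : (1 - lam) ^ K ≤ (1 - lammin) ^ K :=
    pow_le_pow_left₀ h0 (by linarith) K
  have hexp : (1 - lammin) ≤ Real.exp (-lammin) := by
    have := Real.add_one_le_exp (-lammin)
    linarith
  have hle2 : (1 - lammin) ^ K ≤ Real.exp (-lammin) ^ K :=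
    pow_le_pow_left₀ (by linarith) hexp K
  have hKge : (1 / lammin) * Real.log 2 ≤ (K : ℝ) := by
    rw [hK]; exact Nat.le_ceil _
  have hKl : Real.log 2 ≤ (K : ℝ) * lammin := by
    have := mul_le_mul_of_nonneg_right hKge (le_of_lt hlam)
    calc Real.log 2 = (1 / lammin) * Real.log 2 * lammin := by
          field_simp
      _ ≤ (K : ℝ) * lammin := this
  have hle3 : Real.exp (-lammin) ^ K = Real.exp (-(K * lammin)) := by
    rw [← Real.exp_nat_mul]; ring_nf
  have hle4 : Real.exp (-((K:ℝ) * lammin)) ≤ Real.exp (-Real.log 2) := by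
    apply Real.exp_le_exp.2; linarith
  have h2' : Real.exp (-Real.log 2) = 1 / 2 := by
    rw [Real.exp_neg, Real.exp_log (by norm_num)]; norm_num
  calc (1 - lam) ^ K ≤ (1 - lammin) ^ K := hle
    _ ≤ Real.exp (-lammin) ^ K := hle2
    _ = Real.exp (-((K:ℝ) * lammin)) := hle3
    _ ≤ Real.exp (-Real.log 2) := hle4
    _ = 1 / 2 := h2'

/-- conjugation commutes with powers for unitary conjugation -/
lemma aux_conj_pow_17 {n : ℕ} (U M : Matrix (Fin n) (Fin n) ℝ)
    (hU2 : U * star U = 1) (K : ℕ) :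
    (U * M * star U) ^ K = U * M ^ K * star U := by
  induction K with
  | zero => simp [mul_assoc, hU2]
  | succ k ih =>
      rw [pow_succ, pow_succ, ih]
      have hU1 : star U * U = 1 := mul_eq_one_comm.mp hU2
      calc U * M ^ k * star U * (U * M * star U)
          = U * M ^ k * (star U * U) * M * star U := by
            simp only [mul_assoc]
        _ = U * M ^ k * M * star U := by rw [hU1, mul_one]
        _ = U * (M ^ k * M) * star U := by simp only [mul_assoc]

theorem stmt_17 {n : ℕ} (W : Matrix (Fin n) (Fin n) ℝ) (lammin : ℝ)
    (hlam : 0 < lammin)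
    (hpsd : W.PosSemidef) (hle1 : (1 - W).PosSemidef)
    (heig : ∀ μ : ℝ, Module.End.HasEigenvalue (Matrix.toLin' W) μ →
      μ = 0 ∨ (lammin ≤ μ ∧ μ ≤ 1))
    (K : ℕ) (hK : K = ⌈(1 / lammin) * Real.log 2⌉₊)
    (D : Matrix (Fin n) (Fin n) ℝ) (hD : D = 1 - (1 - W) ^ K) :
    D.PosSemidef ∧
    (∀ v : Fin n → ℝ, W.mulVec v = 0 ↔ D.mulVec v = 0) ∧
    (∀ μ : ℝ, Module.End.HasEigenvalue (Matrix.toLin' D) μ →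
      μ = 0 ∨ (1 / 2 ≤ μ ∧ μ ≤ 1)) ∧
    (∀ μ₁ μ₂ : ℝ, Module.End.HasEigenvalue (Matrix.toLin' D) μ₁ → μ₁ ≠ 0 →
      Module.End.HasEigenvalue (Matrix.toLin' D) μ₂ → μ₂ ≠ 0 →
      μ₁ ≤ 2 * μ₂) := by
  have hW : W.IsHermitian := hpsd.isHermitian
  set U : Matrix (Fin n) (Fin n) ℝ := (hW.eigenvectorUnitary : Matrix (Fin n) (Fin n) ℝ) with hUdef
  have hU2 : U * star U = 1 := Matrix.mem_unitaryGroup_iff.mp hW.eigenvectorUnitary.2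
  have hU1 : star U * U = 1 := mul_eq_one_comm.mp hU2
  set d : Fin n → ℝ := hW.eigenvalues with hddef
  have hsp : W = U * diagonal d * star U := by
    have := hW.spectral_theorem
    simpa using this
  -- each eigenvalue d i satisfies heig's hypothesis
  have hdi : ∀ i, d i = 0 ∨ (lammin ≤ d i ∧ d i ≤ 1) := by
    intro i
    apply heig
    have hb := hW.mulVec_eigenvectorBasis i
    have hne : ⇑(hW.eigenvectorBasis i) ≠ 0 := by
      have := hW.eigenvectorBasis.orthonormal.ne_zero i
      intro h
      apply this
      ext j
      exact congrFun h j
    exact Module.End.hasEigenvalue_of_hasEigenvector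
      ⟨Module.End.mem_eigenspace_iff.2 (by simpa [Matrix.toLin'_apply] using hb), hne⟩
  set c : Fin n → ℝ := fun i => 1 - (1 - d i) ^ K with hcdef
  -- spectral representation of D
  have hDsp : D = U * diagonal c * star U := by
    have h1W : (1 : Matrix (Fin n) (Fin n) ℝ) - W
        = U * diagonal (fun i => 1 - d i) * star U := by
      have : (diagonal (fun i => 1 - d i) : Matrix (Fin n) (Fin n) ℝ)
          = 1 - diagonal d := by
        rw [← diagonal_one, ← diagonal_sub]
      rw [this, hsp]
      rw [mul_sub, sub_mul, mul_one, hU2]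
    rw [hD, h1W, aux_conj_pow_17 _ _ hU2, diagonal_pow]
    have : (diagonal c : Matrix (Fin n) (Fin n) ℝ)
        = 1 - diagonal ((fun i => 1 - d i) ^ K) := by
      rw [← diagonal_one, ← diagonal_sub]
      congr 1
    rw [this, mul_sub, sub_mul, mul_one, hU2]
  -- properties of c
  have hc : ∀ i, c i = 0 ∨ (1 / 2 ≤ c i ∧ c i ≤ 1) := by
    intro i
    rcases hdi i with h | ⟨h1, h2⟩
    · left; simp [hcdef, h]
    · right
      constructor
      · have := aux_scalar_17 hlam h1 h2 hK
        simp only [hcdef]; linarith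
      · have h0 : (0:ℝ) ≤ 1 - d i := by linarith
        have := pow_nonneg h0 K
        simp only [hcdef]; linarith
  have hc0 : ∀ i, d i = 0 ↔ c i = 0 := by
    intro i
    constructor
    · intro h; simp [hcdef, h]
    · intro h
      rcases hdi i with h' | ⟨h1, h2⟩
      · exact h'
      · exfalso
        rcases hc i with hz | ⟨hg, _⟩
        · have := aux_scalar_17 hlam h1 h2 hK
          simp only [hcdef] at hz; linarith
        · linarith [hg, h ▸ hg]
  have hUinv : ∀ x : Fin n → ℝ, U *ᵥ (star U *ᵥ x) = x := by
    intro x; rw [mulVec_mulVec, hU2, one_mulVec]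
  have hUinv' : ∀ x : Fin n → ℝ, star U *ᵥ (U *ᵥ x) = x := by
    intro x; rw [mulVec_mulVec, hU1, one_mulVec]
  -- eigenvalue characterization for D
  have heigD : ∀ μ : ℝ, Module.End.HasEigenvalue (Matrix.toLin' D) μ → ∃ i, c i = μ := by
    intro μ hμ
    obtain ⟨v, hvmem, hvne⟩ := hμ.exists_hasEigenvector
    have hv : D *ᵥ v = μ • v := by
      have h := Module.End.mem_eigenspace_iff.mp hvmem
      rwa [Matrix.toLin'_apply] at h
    set u : Fin n → ℝ := star U *ᵥ v with hudef
    have hune : u ≠ 0 := by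
      intro h
      apply hvne
      have h2 : U *ᵥ u = v := hUinv v
      rw [h, mulVec_zero] at h2
      exact h2.symm
    have hdu : diagonal c *ᵥ u = μ • u := by
      have h1 : D *ᵥ v = U *ᵥ (diagonal c *ᵥ u) := by
        rw [hDsp, ← mulVec_mulVec, ← mulVec_mulVec]
      have h2 : U *ᵥ (diagonal c *ᵥ u) = μ • v := by rw [← h1, hv]
      have h3 : star U *ᵥ (U *ᵥ (diagonal c *ᵥ u)) = star U *ᵥ (μ • v) := by rw [h2]
      rw [hUinv', mulVec_smul] at h3
      exact h3
    obtain ⟨i, hi⟩ := Function.ne_iff.mp hune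
    have : c i * u i = μ * u i := by
      have := congrFun hdu i
      rwa [mulVec_diagonal] at this
    exact ⟨i, mul_right_cancel₀ (by simpa using hi) this⟩
  clear_value c
  refine ⟨?_, ?_, ?_, ?_⟩
  · -- PSD
    rw [hDsp, Matrix.star_eq_conjTranspose]
    apply Matrix.PosSemidef.mul_mul_conjTranspose_same
    rw [Matrix.posSemidef_diagonal_iff]
    intro i
    rcases hc i with h | ⟨h1, _⟩
    · rw [h]
    · linarith
  · -- kernels agree
    intro v
    set u : Fin n → ℝ := star U *ᵥ v with hudef
    have key : ∀ (M : Matrix (Fin n) (Fin n) ℝ) (e : Fin n → ℝ),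
        M = U * diagonal e * star U → (M *ᵥ v = 0 ↔ ∀ i, e i * u i = 0) := by
      intro M e hM
      rw [hM, ← mulVec_mulVec, ← mulVec_mulVec]
      constructor
      · intro h
        have h2 : star U *ᵥ (U *ᵥ (diagonal e *ᵥ u)) = star U *ᵥ 0 := by rw [h]
        rw [hUinv', mulVec_zero] at h2
        intro i
        have := congrFun h2 i
        rwa [mulVec_diagonal] at this
      · intro h
        have : diagonal e *ᵥ u = 0 := by
          ext i; rw [mulVec_diagonal]; exact h i
        rw [this, mulVec_zero]
    rw [key W d hsp, key D c hDsp]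
    apply forall_congr'
    intro i
    rcases hdi i with h | ⟨h1, h2⟩
    · rw [h, (hc0 i).mp h]
    · have hd : d i ≠ 0 := by intro h; rw [h] at h1; linarith
      have hcne : c i ≠ 0 := fun h => hd ((hc0 i).mpr h)
      constructor
      · intro h
        rcases mul_eq_zero.mp h with h' | h'
        · exact absurd h' hd
        · rw [h', mul_zero]
      · intro h
        rcases mul_eq_zero.mp h with h' | h'
        · exact absurd h' hcne
        · rw [h', mul_zero]
  · -- eigenvalues of D
    intro μ hμ
    obtain ⟨i, hi⟩ := heigD μ hμ
    rw [← hi]; exact hc i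
  · -- ratio bound
    intro μ₁ μ₂ h₁ hne₁ h₂ hne₂
    obtain ⟨i, hi⟩ := heigD μ₁ h₁
    obtain ⟨j, hj⟩ := heigD μ₂ h₂
    rcases hc i with h | ⟨_, hle⟩
    · exact absurd (hi ▸ h) hne₁
    · rcases hc j with h' | ⟨hge, _⟩
      · exact absurd (hj ▸ h') hne₂
      · rw [← hi, ← hj]; linarith
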